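/- Let k be a field of characteristic 0 and m ≥ 2, k_m = k[t]/(t^m). The relative Milnor K-group K_n^M(k_m, (t)) := ker(K_n^M(k_m) → K_n^M(k)) (kernel of evaluation at t=0) is generated by Milnor symbols {a_1, a_2, ..., a_n} with a_1 ∈ 1 + t·k_m and a_2, ..., a_n ∈ k_m^×. -/

import Mathlib

open FreeAbelianGroup

/-! Milnor K-theory of a commutative ring, presented by generators (tuples of units) and
relations (multilinearity and the Steinberg relation). -/

/-- Relations defining Milnor K-theory. -/
def milnorRel (R : Type) [CommRing R] (n : ℕ) :
    AddSubgroup (FreeAbelianGroup (Fin n → Rˣ)) :=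
  AddSubgroup.closure
    ({x | ∃ (u : Fin n → Rˣ) (i : Fin n) (a b : Rˣ),
        x = of (Function.update u i (a * b)) - of (Function.update u i a)
              - of (Function.update u i b)} ∪
     {x | ∃ (u : Fin n → Rˣ) (i j : Fin n), i ≠ j ∧ ((u i : R) + (u j : R) = 1) ∧ x = of u})

/-- The `n`-th Milnor K-group of a commutative ring. -/
abbrev MilnorK (R : Type) [CommRing R] (n : ℕ) : Type :=
  FreeAbelianGroup (Fin n → Rˣ) ⧸ milnorRel R n

/-- The Milnor symbol `{u 0, …, u (n-1)}`. -/
def milnorSymbol {R : Type} [CommRing R] {n : ℕ} (u : Fin n → Rˣ) : MilnorK R n :=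
  QuotientAddGroup.mk (of u)

/-- Functoriality of Milnor K-groups. -/
def MilnorK.map {R S : Type} [CommRing R] [CommRing S] (f : R →+* S) (n : ℕ) :
    MilnorK R n →+ MilnorK S n :=
  QuotientAddGroup.lift (milnorRel R n)
    ((QuotientAddGroup.mk' (milnorRel S n)).comp
      (FreeAbelianGroup.lift (fun u : Fin n → Rˣ =>
        of (fun i => Units.map (f : R →* S) (u i)))))
    (by
      show milnorRel R n ≤ AddMonoidHom.ker _
      refine (AddSubgroup.closure_le _).2 ?_
      have h : ∀ (u : Fin n → Rˣ) (i : Fin n) (c : Rˣ),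
          (fun j => Units.map (f : R →* S) (Function.update u i c j)) =
            Function.update (fun j => Units.map (f : R →* S) (u j)) i
              (Units.map (f : R →* S) c) := fun u i c =>
        funext fun j => Function.apply_update (fun _ x => Units.map (f : R →* S) x) u i c j
      rintro x (⟨u, i, a, b, rfl⟩ | ⟨u, i, j, hij, h1, rfl⟩) <;>
        simp only [SetLike.mem_coe, AddMonoidHom.mem_ker, map_sub, AddMonoidHom.coe_comp,
          Function.comp_apply, FreeAbelianGroup.lift_apply_of, QuotientAddGroup.mk'_apply,
          ← QuotientAddGroup.mk_sub, QuotientAddGroup.eq_zero_iff]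
      · exact AddSubgroup.subset_closure (Or.inl ⟨fun j => Units.map (f : R →* S) (u j), i,
          Units.map (f : R →* S) a, Units.map (f : R →* S) b,
          by rw [h u i (a * b), h u i a, h u i b, map_mul]⟩)
      · refine AddSubgroup.subset_closure (Or.inr ⟨fun j => Units.map (f : R →* S) (u j),
          i, j, hij, ?_, rfl⟩)
        simp only [Units.coe_map, MonoidHom.coe_coe]
        rw [← map_add, h1, map_one])

/-- The truncated polynomial ring `k_m := k[t]/(t^m)`. -/
abbrev TruncPoly (k : Type) [Field k] (m : ℕ) : Type :=
  Polynomial k ⧸ Ideal.span {(Polynomial.X : Polynomial k) ^ m}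

/-- The ideal `t·k_m` of `k[t]/(t^m)`. -/
noncomputable abbrev TruncPoly.tIdeal (k : Type) [Field k] (m : ℕ) : Ideal (TruncPoly k m) :=
  Ideal.span {Ideal.Quotient.mk _ Polynomial.X}

/-- Evaluation at `t = 0`, `k[t]/(t^m) → k`. -/
noncomputable def evalZero (k : Type) [Field k] (m : ℕ) (hm : 0 < m) :
    TruncPoly k m →+* k :=
  Ideal.Quotient.lift _ (Polynomial.evalRingHom 0) (by
    intro a ha
    rw [Ideal.mem_span_singleton] at ha
    obtain ⟨c, rfl⟩ := ha
    simp [zero_pow hm.ne'])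

/-! ### Auxiliary lemmas -/

section SymbolLemmas

variable {R : Type} [CommRing R] {n : ℕ}

theorem milnorSymbol_update_mul (u : Fin n → Rˣ) (i : Fin n) (a b : Rˣ) :
    milnorSymbol (Function.update u i (a * b)) =
      milnorSymbol (Function.update u i a) + milnorSymbol (Function.update u i b) := by
  have h : of (Function.update u i (a * b)) - of (Function.update u i a)
      - of (Function.update u i b) ∈ milnorRel R n :=
    AddSubgroup.subset_closure (Or.inl ⟨u, i, a, b, rfl⟩)
  have h2 := (QuotientAddGroup.eq_zero_iff _).2 h
  rw [QuotientAddGroup.mk_sub, QuotientAddGroup.mk_sub, sub_sub, sub_eq_zero] at h2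
  exact h2

theorem milnorSymbol_steinberg (u : Fin n → Rˣ) (i j : Fin n) (hij : i ≠ j)
    (h : (u i : R) + (u j : R) = 1) : milnorSymbol u = 0 :=
  (QuotientAddGroup.eq_zero_iff _).2
    (AddSubgroup.subset_closure (Or.inr ⟨u, i, j, hij, h, rfl⟩))

theorem milnorSymbol_eq_zero (u : Fin n → Rˣ) (i : Fin n) (h : u i = 1) :
    milnorSymbol u = 0 := by
  have h1 := milnorSymbol_update_mul u i 1 1
  rw [mul_one, ← h, Function.update_eq_self] at h1
  exact left_eq_add.mp h1

/-- Symbol with two marked slots. -/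
def dsym (v : Fin n → Rˣ) (i j : Fin n) (a b : Rˣ) : MilnorK R n :=
  milnorSymbol (Function.update (Function.update v i a) j b)

theorem dsym_mul_left (v : Fin n → Rˣ) {i j : Fin n} (hij : i ≠ j) (a a' b : Rˣ) :
    dsym v i j (a * a') b = dsym v i j a b + dsym v i j a' b := by
  unfold dsym
  rw [Function.update_comm hij (a * a') b v, Function.update_comm hij a b v,
    Function.update_comm hij a' b v]
  exact milnorSymbol_update_mul _ i a a'

theorem dsym_mul_right (v : Fin n → Rˣ) (i j : Fin n) (a b b' : Rˣ) :
    dsym v i j a (b * b') = dsym v i j a b + dsym v i j a b' :=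
  milnorSymbol_update_mul _ j b b'

theorem dsym_one_left (v : Fin n → Rˣ) {i j : Fin n} (hij : i ≠ j) (b : Rˣ) :
    dsym v i j 1 b = 0 :=
  milnorSymbol_eq_zero _ i
    (by rw [Function.update_of_ne hij, Function.update_self])

theorem dsym_one_right (v : Fin n → Rˣ) (i j : Fin n) (a : Rˣ) :
    dsym v i j a 1 = 0 :=
  milnorSymbol_eq_zero _ j (Function.update_self _ _ _)

theorem dsym_inv_right (v : Fin n → Rˣ) (i j : Fin n) (a b : Rˣ) :
    dsym v i j a b⁻¹ = - dsym v i j a b := by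
  have h := dsym_mul_right v i j a b b⁻¹
  rw [mul_inv_cancel, dsym_one_right] at h
  exact eq_neg_of_add_eq_zero_right h.symm

theorem dsym_steinberg (v : Fin n → Rˣ) {i j : Fin n} (hij : i ≠ j) (a b : Rˣ)
    (h : (a : R) + (b : R) = 1) : dsym v i j a b = 0 :=
  milnorSymbol_steinberg _ i j hij
    (by rw [Function.update_of_ne hij, Function.update_self, Function.update_self]; exact h)

theorem dsym_expand (v : Fin n → Rˣ) {i j : Fin n} (hij : i ≠ j) (a b : Rˣ) :
    dsym v i j (a * b) (-(a * b)) =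
      dsym v i j a (-a) + dsym v i j b (-b) + (dsym v i j a b + dsym v i j b a) := by
  have h1 : (-(a * b)) = (-a) * b := by rw [neg_mul]
  have h2 : (-(a * b)) = (-b) * a := by rw [neg_mul, mul_comm]
  have e1 : dsym v i j a (-(a * b)) = dsym v i j a (-a) + dsym v i j a b := by
    rw [h1, dsym_mul_right]
  have e2 : dsym v i j b (-(a * b)) = dsym v i j b (-b) + dsym v i j b a := by
    rw [h2, dsym_mul_right]
  rw [dsym_mul_left v hij, e1, e2]
  abel

theorem milnorSymbol_eq_dsym (v : Fin n → Rˣ) (i j : Fin n) :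
    milnorSymbol v = dsym v i j (v i) (v j) := by
  unfold dsym
  rw [Function.update_eq_self, Function.update_eq_self]

end SymbolLemmas

section TruncPolySec

variable {k : Type} [Field k] {m : ℕ}

/-- The constant inclusion `k → k[t]/(t^m)`. -/
noncomputable def iotaTP (k : Type) [Field k] (m : ℕ) : k →+* TruncPoly k m :=
  (Ideal.Quotient.mk _).comp Polynomial.C

theorem evalZero_mk (hm : 0 < m) (p : Polynomial k) :
    evalZero k m hm (Ideal.Quotient.mk _ p) = p.eval 0 :=
  Ideal.Quotient.lift_mk _ _ _

theorem evalZero_iotaTP (hm : 0 < m) (c : k) : evalZero k m hm (iotaTP k m c) = c := by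
  rw [iotaTP, RingHom.comp_apply, evalZero_mk hm, Polynomial.eval_C]

theorem mem_tIdeal_iff (hm : 0 < m) {x : TruncPoly k m} :
    x ∈ TruncPoly.tIdeal k m ↔ evalZero k m hm x = 0 := by
  constructor
  · intro hx
    rw [TruncPoly.tIdeal, Ideal.mem_span_singleton] at hx
    obtain ⟨y, rfl⟩ := hx
    rw [map_mul, evalZero_mk hm, Polynomial.eval_X, zero_mul]
  · obtain ⟨p, rfl⟩ := Ideal.Quotient.mk_surjective x
    intro hx
    rw [evalZero_mk hm] at hx
    have hdvd : Polynomial.X ∣ p :=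
      Polynomial.X_dvd_iff.2 (by rwa [Polynomial.coeff_zero_eq_eval_zero])
    obtain ⟨q, rfl⟩ := hdvd
    exact Ideal.mem_span_singleton.2 ⟨Ideal.Quotient.mk _ q, by rw [map_mul]⟩

theorem isUnit_TP (hm : 0 < m) (x : TruncPoly k m) (h : evalZero k m hm x ≠ 0) :
    IsUnit x := by
  set c := iotaTP k m (evalZero k m hm x) with hc
  have hu : IsUnit c := (isUnit_iff_ne_zero.2 h).map (iotaTP k m)
  have hnil : IsNilpotent (x - c) := by
    have hmem : x - c ∈ TruncPoly.tIdeal k m := by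
      rw [mem_tIdeal_iff hm, map_sub, hc, evalZero_iotaTP hm, sub_self]
    rw [TruncPoly.tIdeal, Ideal.mem_span_singleton] at hmem
    obtain ⟨y, hy⟩ := hmem
    refine ⟨m, ?_⟩
    rw [hy, mul_pow, ← map_pow, Ideal.Quotient.eq_zero_iff_mem.2
      (Ideal.mem_span_singleton_self _), zero_mul]
  have := hnil.isUnit_add_left_of_commute hu (Commute.all _ _)
  rwa [add_sub_cancel] at this

/-- A unit of `k[t]/(t^m)` from an element with nonzero constant term. -/
noncomputable def mkUnit (hm : 0 < m) (x : TruncPoly k m) (h : evalZero k m hm x ≠ 0) :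
    (TruncPoly k m)ˣ :=
  (isUnit_TP hm x h).unit

@[simp] theorem val_mkUnit (hm : 0 < m) (x : TruncPoly k m) (h : evalZero k m hm x ≠ 0) :
    (mkUnit hm x h : TruncPoly k m) = x :=
  IsUnit.unit_spec _

theorem evalZero_unit_ne_zero (hm : 0 < m) (a : (TruncPoly k m)ˣ) :
    evalZero k m hm (a : TruncPoly k m) ≠ 0 := by
  have h : evalZero k m hm ↑a * evalZero k m hm ↑a⁻¹ = 1 := by
    rw [← map_mul, Units.mul_inv, map_one]
  exact left_ne_zero_of_mul_eq_one h

theorem evalZero_unit_inv (hm : 0 < m) (a : (TruncPoly k m)ˣ) :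
    evalZero k m hm (↑a⁻¹ : TruncPoly k m) = (evalZero k m hm (a : TruncPoly k m))⁻¹ :=
  eq_inv_of_mul_eq_one_left (by rw [← map_mul, Units.inv_mul, map_one])

variable {n : ℕ}

theorem dsym_neg_self_of (hm : 0 < m) (v : Fin n → (TruncPoly k m)ˣ) {i j : Fin n}
    (hij : i ≠ j) (a : (TruncPoly k m)ˣ)
    (ha : evalZero k m hm (a : TruncPoly k m) ≠ 1) :
    dsym v i j a (-a) = 0 := by
  have hb0 : evalZero k m hm (1 - ↑a) ≠ 0 := by
    rw [map_sub, map_one]; exact sub_ne_zero.2 (Ne.symm ha)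
  set b := mkUnit hm _ hb0 with hbdef
  have hab : dsym v i j a b = 0 :=
    dsym_steinberg v hij a b (by rw [hbdef, val_mkUnit]; ring)
  have hainv : evalZero k m hm (↑a⁻¹ : TruncPoly k m) ≠ 1 := by
    rw [evalZero_unit_inv hm]
    exact fun h => ha (inv_eq_one.mp h)
  have hc0 : evalZero k m hm (1 - ↑a⁻¹) ≠ 0 := by
    rw [map_sub, map_one]; exact sub_ne_zero.2 (Ne.symm hainv)
  set c := mkUnit hm _ hc0 with hcdef
  have hac' : dsym v i j a⁻¹ c = 0 :=
    dsym_steinberg v hij a⁻¹ c (by rw [hcdef, val_mkUnit]; ring)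
  have hac : dsym v i j a c = 0 := by
    have h1 := dsym_mul_left v hij a⁻¹ a c
    rw [inv_mul_cancel, dsym_one_left v hij, hac', zero_add] at h1
    exact h1.symm
  have hbc : -a = b * c⁻¹ := by
    rw [eq_mul_inv_iff_mul_eq]
    refine Units.ext ?_
    rw [Units.val_mul, Units.val_neg, hbdef, hcdef, val_mkUnit, val_mkUnit]
    have hmi : (a : TruncPoly k m) * ↑a⁻¹ = 1 := a.mul_inv
    linear_combination hmi
  rw [hbc, dsym_mul_right, hab, dsym_inv_right, hac, neg_zero, add_zero]

theorem dsym_neg_self [CharZero k] (hm : 0 < m) (v : Fin n → (TruncPoly k m)ˣ)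
    {i j : Fin n} (hij : i ≠ j) (a : (TruncPoly k m)ˣ) :
    dsym v i j a (-a) = 0 := by
  by_cases ha : evalZero k m hm (a : TruncPoly k m) ≠ 1
  · exact dsym_neg_self_of hm v hij a ha
  push_neg at ha
  have phi : ∀ x : (TruncPoly k m)ˣ, evalZero k m hm (x : TruncPoly k m) ≠ 1 →
      dsym v i j x (-x) = 0 := fun x hx => dsym_neg_self_of hm v hij x hx
  have psi : ∀ x y : (TruncPoly k m)ˣ,
      evalZero k m hm ((x * y : (TruncPoly k m)ˣ) : TruncPoly k m) ≠ 1 →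
      evalZero k m hm (x : TruncPoly k m) ≠ 1 →
      evalZero k m hm (y : TruncPoly k m) ≠ 1 →
      dsym v i j x y + dsym v i j y x = 0 := by
    intro x y h1 h2 h3
    have hexp := dsym_expand v hij x y
    rw [phi _ h1, phi _ h2, phi _ h3, zero_add, zero_add] at hexp
    exact hexp.symm
  have h2 : evalZero k m hm (2 : TruncPoly k m) ≠ 0 := by
    rw [map_ofNat]; exact two_ne_zero
  have h3 : evalZero k m hm (3 : TruncPoly k m) ≠ 0 := by
    rw [map_ofNat]; exact three_ne_zero
  set two := mkUnit hm _ h2 with h2def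
  set three := mkUnit hm _ h3 with h3def
  have e2 : evalZero k m hm (two : TruncPoly k m) = 2 := by rw [h2def, val_mkUnit, map_ofNat]
  have e3 : evalZero k m hm (three : TruncPoly k m) = 3 := by rw [h3def, val_mkUnit, map_ofNat]
  set y := two⁻¹ * a with hydef
  have hay : two * y = a := by rw [hydef, mul_inv_cancel_left]
  have ey : evalZero k m hm (y : TruncPoly k m) = 2⁻¹ := by
    rw [hydef, Units.val_mul, map_mul, evalZero_unit_inv hm, e2, ha, mul_one]
  set z := three⁻¹ * y with hzdef
  have hyz : three * z = y := by rw [hzdef, mul_inv_cancel_left]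
  have ez : evalZero k m hm (z : TruncPoly k m) = 3⁻¹ * 2⁻¹ := by
    rw [hzdef, Units.val_mul, map_mul, evalZero_unit_inv hm, e3, ey]
  have p23 : dsym v i j two three + dsym v i j three two = 0 := by
    refine psi two three ?_ ?_ ?_
    · rw [Units.val_mul, map_mul, e2, e3]; norm_num
    · rw [e2]; norm_num
    · rw [e3]; norm_num
  have p2z : dsym v i j two z + dsym v i j z two = 0 := by
    refine psi two z ?_ ?_ ?_
    · rw [Units.val_mul, map_mul, e2, ez]; norm_num
    · rw [e2]; norm_num
    · rw [ez]; norm_num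
  have q1 : dsym v i j two y = dsym v i j two three + dsym v i j two z := by
    rw [← hyz, dsym_mul_right]
  have q2 : dsym v i j y two = dsym v i j three two + dsym v i j z two := by
    rw [← hyz, dsym_mul_left v hij]
  have py : dsym v i j two y + dsym v i j y two = 0 := by
    rw [q1, q2, add_add_add_comm, p23, p2z, add_zero]
  have hexp := dsym_expand v hij two y
  rw [hay, phi two (by rw [e2]; norm_num), phi y (by rw [ey]; norm_num), py,
    zero_add, zero_add] at hexp
  exact hexp

theorem dsym_comm [CharZero k] (hm : 0 < m) (v : Fin n → (TruncPoly k m)ˣ)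
    {i j : Fin n} (hij : i ≠ j) (a b : (TruncPoly k m)ˣ) :
    dsym v i j a b = - dsym v i j b a := by
  have h := dsym_expand v hij a b
  rw [dsym_neg_self hm v hij (a * b), dsym_neg_self hm v hij a,
    dsym_neg_self hm v hij b, zero_add, zero_add] at h
  exact eq_neg_of_add_eq_zero_left h.symm

theorem MilnorK.map_symbol {R S : Type} [CommRing R] [CommRing S] (f : R →+* S) {n : ℕ}
    (u : Fin n → Rˣ) :
    MilnorK.map f n (milnorSymbol u) =
      milnorSymbol (fun i => Units.map (f : R →* S) (u i)) := rfl

theorem key_lemma [CharZero k] (hm : 0 < m) (hn : 0 < n)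
    (x : MilnorK (TruncPoly k m) n)
    (hx : MilnorK.map (evalZero k m hm) n x = 0) :
    x ∈ AddSubgroup.closure
        {x : MilnorK (TruncPoly k m) n | ∃ u : Fin n → (TruncPoly k m)ˣ,
          ((u ⟨0, hn⟩ : TruncPoly k m) - 1 ∈ TruncPoly.tIdeal k m) ∧ x = milnorSymbol u} := by
  set C := AddSubgroup.closure
      {x : MilnorK (TruncPoly k m) n | ∃ u : Fin n → (TruncPoly k m)ˣ,
        ((u ⟨0, hn⟩ : TruncPoly k m) - 1 ∈ TruncPoly.tIdeal k m) ∧ x = milnorSymbol u}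
      with hCdef
  suffices h : ∀ w : MilnorK (TruncPoly k m) n,
      w - MilnorK.map (iotaTP k m) n (MilnorK.map (evalZero k m hm) n w) ∈ C by
    have := h x
    rwa [hx, map_zero, sub_zero] at this
  intro w
  induction w using QuotientAddGroup.induction_on with
  | H g =>
  induction g using FreeAbelianGroup.induction_on with
  | zero =>
    rw [show ((QuotientAddGroup.mk 0 : MilnorK (TruncPoly k m) n)) = 0 from rfl,
      map_zero, map_zero, sub_zero]
    exact zero_mem C
  | neg g hg =>
    have h2 := neg_mem hg
    rw [neg_sub] at h2
    rw [QuotientAddGroup.mk_neg, map_neg, map_neg, neg_sub_neg]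
    exact h2
  | add g1 g2 hg1 hg2 =>
    rw [QuotientAddGroup.mk_add, map_add, map_add, add_sub_add_comm]
    exact add_mem hg1 hg2
  | of u =>
    show milnorSymbol u -
      MilnorK.map (iotaTP k m) n (MilnorK.map (evalZero k m hm) n (milnorSymbol u)) ∈ C
    rw [MilnorK.map_symbol, MilnorK.map_symbol]
    set c : Fin n → (TruncPoly k m)ˣ := fun i =>
      Units.map ((iotaTP k m : k →+* TruncPoly k m) : k →* TruncPoly k m)
        (Units.map ((evalZero k m hm : TruncPoly k m →+* k) : TruncPoly k m →* k) (u i))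
      with hcdef
    have hcu : ∀ i : Fin n, evalZero k m hm ((c i : TruncPoly k m)) =
        evalZero k m hm ((u i : TruncPoly k m)) := by
      intro i
      rw [hcdef]
      simp only [Units.coe_map, MonoidHom.coe_coe]
      rw [evalZero_iotaTP hm]
    have main : ∀ j : ℕ, j ≤ n →
        milnorSymbol u - milnorSymbol (fun i : Fin n => if (i : ℕ) < j then c i else u i)
          ∈ C := by
      intro j
      induction j with
      | zero =>
        intro _
        have hfun : (fun i : Fin n => if (i : ℕ) < 0 then c i else u i) = u :=
          funext fun i => if_neg (Nat.not_lt_zero _)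
        rw [hfun, sub_self]
        exact zero_mem C
      | succ j ih =>
        intro hj1
        have hj : j < n := hj1
        have prev := ih (le_of_lt hj)
        set jj : Fin n := ⟨j, hj⟩ with hjjdef
        set base : Fin n → (TruncPoly k m)ˣ :=
          (fun i : Fin n => if (i : ℕ) < j + 1 then c i else u i) with hbase
        have hstep : milnorSymbol (fun i : Fin n => if (i : ℕ) < j then c i else u i)
            - milnorSymbol base ∈ C := by
          set w : (TruncPoly k m)ˣ := (c jj)⁻¹ * u jj with hwdef
          have hwmem : (↑w : TruncPoly k m) - 1 ∈ TruncPoly.tIdeal k m := by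
            rw [mem_tIdeal_iff hm, map_sub, map_one]
            have hone : evalZero k m hm (w : TruncPoly k m) = 1 := by
              rw [hwdef, Units.val_mul, map_mul, evalZero_unit_inv hm, hcu jj]
              exact inv_mul_cancel₀ (evalZero_unit_ne_zero hm (u jj))
            rw [hone, sub_self]
          have h1 : (fun i : Fin n => if (i : ℕ) < j then c i else u i)
              = Function.update base jj (u jj) := by
            funext i
            by_cases hi : i = jj
            · subst hi
              rw [Function.update_self]
              exact if_neg (by simp [hjjdef])
            · rw [Function.update_of_ne hi]
              have hvi : (i : ℕ) ≠ j := fun h => hi (Fin.ext (by simpa [hjjdef] using h))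
              show (if (i : ℕ) < j then c i else u i) = if (i : ℕ) < j + 1 then c i else u i
              by_cases h2 : (i : ℕ) < j
              · rw [if_pos h2, if_pos (by omega)]
              · rw [if_neg h2, if_neg (by omega)]
          have h2 : base = Function.update base jj (c jj) := by
            funext i
            by_cases hi : i = jj
            · subst hi
              rw [Function.update_self, hbase]
              exact if_pos (by simp [hjjdef])
            · rw [Function.update_of_ne hi]
          have hmul : u jj = c jj * w := by rw [hwdef, mul_inv_cancel_left]
          rw [h1, hmul, milnorSymbol_update_mul, ← h2, add_sub_cancel_left]
          -- goal : milnorSymbol (Function.update base jj w) ∈ C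
          by_cases hj0 : j = 0
          · have hzz : (⟨0, hn⟩ : Fin n) = jj := by
              rw [hjjdef]; exact Fin.ext (by simp [hj0])
            rw [hCdef]
            refine AddSubgroup.subset_closure ⟨Function.update base jj w, ?_, rfl⟩
            rw [hzz, Function.update_self]
            exact hwmem
          · have hne : (⟨0, hn⟩ : Fin n) ≠ jj := by
              intro h
              apply hj0
              have := congrArg Fin.val h
              simpa [hjjdef] using this.symm
            set t := Function.update base jj w with htdef
            rw [milnorSymbol_eq_dsym t ⟨0, hn⟩ jj, dsym_comm hm t hne]
            refine neg_mem ?_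
            rw [hCdef]
            refine AddSubgroup.subset_closure
              ⟨Function.update (Function.update t ⟨0, hn⟩ (t jj)) jj (t ⟨0, hn⟩), ?_, rfl⟩
            rw [Function.update_of_ne hne, Function.update_self, htdef, Function.update_self]
            exact hwmem
        have := add_mem prev hstep
        rwa [sub_add_sub_cancel] at this
    have hfin := main n le_rfl
    have hcn : (fun i : Fin n => if (i : ℕ) < n then c i else u i) = c :=
      funext fun i => if_pos i.isLt
    rwa [hcn] at hfin

end TruncPolySec

/-- Let `k` be a field of characteristic `0`, `m ≥ 2`,
`k_m = k[t]/(t^m)`.  The relative Milnor K-group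
`K_n^M(k_m,(t)) := ker(K_n^M(k_m) → K_n^M(k))` (kernel of evaluation at `t = 0`) is
generated by Milnor symbols `{a₁, …, aₙ}` with `a₁ ∈ 1 + t·k_m` (and `a₂,…,aₙ ∈ k_m^×`). -/
theorem stmt10 {k : Type} [Field k] [CharZero k] (m n : ℕ) (hm : 2 ≤ m) (hn : 0 < n) :
    AddSubgroup.closure
        {x : MilnorK (TruncPoly k m) n | ∃ u : Fin n → (TruncPoly k m)ˣ,
          ((u ⟨0, hn⟩ : TruncPoly k m) - 1 ∈ TruncPoly.tIdeal k m) ∧ x = milnorSymbol u}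
      = (MilnorK.map (evalZero k m (by omega)) n).ker := by
  have hm0 : 0 < m := by omega
  apply le_antisymm
  · rw [AddSubgroup.closure_le]
    rintro x ⟨u, hu, rfl⟩
    simp only [SetLike.mem_coe, AddMonoidHom.mem_ker]
    have : MilnorK.map (evalZero k m hm0) n (milnorSymbol u) = 0 := by
      rw [MilnorK.map_symbol]
      refine milnorSymbol_eq_zero _ ⟨0, hn⟩ ?_
      refine Units.ext ?_
      rw [Units.coe_map, MonoidHom.coe_coe, Units.val_one]
      have h0 := (mem_tIdeal_iff hm0).1 hu
      rw [map_sub, map_one, sub_eq_zero] at h0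
      exact h0
    exact this
  · intro x hx
    rw [AddMonoidHom.mem_ker] at hx
    have hx' : MilnorK.map (evalZero k m hm0) n x = 0 := hx
    exact key_lemma hm0 hn x hx'
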